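/- For all integers k ≥ 1, n ≥ 1 and c ≥ 1, there exists a universal cycle for the set of k-letter Lipschitz words with constant c over the cyclic alphabet ZMod n, where a word w : Fin k → ZMod n is Lipschitz with constant c if for every i with 0 ≤ i < k−1 the cyclic distance between w(i+1) and w(i) is at most c. -/

import Mathlib

/- The finite set of words of length `k` over a finite alphabet `A`
satisfying a predicate `P`. -/
open Classical in
noncomputable def wordsOf {A : Type*} [Fintype A] {k : ℕ} (P : (Fin k → A) → Prop) :
    Finset (Fin k → A) :=
  Finset.univ.filter P

/-- A nonempty finite set `S` of words of length `k` over `A` admits a universal cycle: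
a function `c : ZMod S.card → A` such that `i ↦ (fun j => c (i + j))` is a bijection
from `ZMod S.card` onto `S`. -/
def HasUCycle {A : Type*} {k : ℕ} (S : Finset (Fin k → A)) : Prop :=
  ∃ c : ZMod S.card → A,
    Set.BijOn (fun i : ZMod S.card => fun j : Fin k => c (i + (j.val : ZMod S.card)))
      Set.univ ↑S

set_option linter.unusedSectionVars false

open List

section Euler
variable {V E : Type*} [DecidableEq V] [DecidableEq E] (src tgt : E → V)

/-- A trail: list of distinct edges, consecutive edges matching. -/
def GTrail (l : List E) : Prop := l.Nodup ∧ l.Chain' fun a b => tgt a = src b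

/-- Cyclically closed. -/
def GClosed (l : List E) : Prop := ∀ h : l ≠ [], tgt (l.getLast h) = src (l.head h)

/-- Cyclic chain condition via indices. -/
def GCyc (l : List E) : Prop := ∀ i (h : i < l.length),
  tgt (l[i]'h) = src (l[(i+1) % l.length]'(Nat.mod_lt _ (by omega)))

variable {src tgt}

omit [DecidableEq E] in
lemma getElem_idx_congr (l : List E) {i j : ℕ} (h : i = j) (hi : i < l.length) :
    l[i]'hi = l[j]'(h ▸ hi) := by subst h; rfl

lemma gcyc_iff {l : List E} :
    ((l.Chain' fun a b => tgt a = src b) ∧ GClosed src tgt l) ↔ GCyc src tgt l := by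
  constructor
  · rintro ⟨hc, hcl⟩ i h
    rcases Nat.lt_or_ge (i+1) l.length with h1 | h1
    · have := (List.isChain_iff_getElem.mp hc) i (by omega)
      rw [getElem_idx_congr l (Nat.mod_eq_of_lt h1)]
      exact this
    · have hi : i = l.length - 1 := by omega
      have hne : l ≠ [] := by intro hnil; rw [hnil] at h; simp at h
      have := hcl hne
      rw [List.getLast_eq_getElem, List.head_eq_getElem] at this
      rw [getElem_idx_congr l (show (i+1) % l.length = 0 by
        have : i + 1 = l.length := by omega
        simp [this]),
        getElem_idx_congr l hi]
      exact this
  · intro hcyc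
    constructor
    · rw [List.Chain', List.isChain_iff_getElem]
      intro i h
      have := hcyc i (by omega)
      rw [getElem_idx_congr l (show (i+1) % l.length = i+1 from Nat.mod_eq_of_lt (by omega))] at this
      exact this
    · intro hne
      have hlen : 0 < l.length := List.length_pos_iff.mpr hne
      have := hcyc (l.length - 1) (by omega)
      rw [List.getLast_eq_getElem, List.head_eq_getElem]
      rw [getElem_idx_congr l (show (l.length - 1 + 1) % l.length = 0 by
        have : l.length - 1 + 1 = l.length := by omega
        simp [this])] at this
      exact this

lemma gcyc_rotate {l : List E} (h : GCyc src tgt l) (j : ℕ) : GCyc src tgt (l.rotate j) := by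
  intro i hi
  have hlen : (l.rotate j).length = l.length := List.length_rotate l j
  have hlpos : 0 < l.length := by omega
  have g1 : (l.rotate j)[i]'hi = l[(i + j) % l.length]'(Nat.mod_lt _ hlpos) := by
    have := List.get_rotate l j ⟨i, hi⟩
    simpa using this
  have g2 : (l.rotate j)[(i+1) % (l.rotate j).length]'(Nat.mod_lt _ (by omega))
      = l[((i + j) % l.length + 1) % l.length]'(Nat.mod_lt _ hlpos) := by
    have h2 : ((i+1) % (l.rotate j).length) < (l.rotate j).length := Nat.mod_lt _ (by omega)
    have := List.get_rotate l j ⟨(i+1) % (l.rotate j).length, h2⟩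
    simp only [List.get_eq_getElem] at this
    rw [this]
    apply getElem_idx_congr
    rw [hlen]
    calc ((i+1) % l.length + j) % l.length = (i+1+j) % l.length := Nat.mod_add_mod ..
      _ = ((i+j) + 1) % l.length := by ring_nf
      _ = ((i+j) % l.length + 1) % l.length := (Nat.mod_add_mod _ _ _).symm
  rw [g1, g2]
  exact h _ _

omit [DecidableEq E] in
lemma map_tgt_perm_map_src {l : List E} (h : GCyc src tgt l) :
    (l.map tgt).Perm (l.map src) := by
  have heq : l.map tgt = (l.rotate 1).map src := by
    apply List.ext_get
    · simp
    · intro i h1 h2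
      simp only [List.get_eq_getElem, List.getElem_map]
      have hi : i < l.length := by simpa using h1
      have hr : (l.rotate 1)[i]'(by simpa using hi)
          = l[(i+1) % l.length]'(Nat.mod_lt _ (by omega)) := by
        have := List.get_rotate l 1 ⟨i, by simpa using hi⟩
        simpa using this
      rw [hr]
      exact h i hi
  rw [heq]
  exact ((l.rotate_perm 1).map src)

omit [DecidableEq E] in
lemma map_tgt_open {l : List E} (hc : l.Chain' fun a b => tgt a = src b) (hne : l ≠ []) :
    l.map tgt = (l.map src).tail ++ [tgt (l.getLast hne)] := by
  induction l with
  | nil => simp at hne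
  | cons e t ih =>
    cases t with
    | nil => simp
    | cons e' t' =>
      have hc' : List.Chain' (fun a b => tgt a = src b) (e' :: t') := hc.tail
      have hlink : tgt e = src e' := List.isChain_cons_cons.mp hc |>.1
      have := ih hc' (by simp)
      simp only [List.map_cons, List.tail_cons] at this ⊢
      rw [List.getLast_cons (by simp)]
      rw [this, hlink]
      simp

omit [DecidableEq E] in
lemma cyc_countP {l : List E} (h : GCyc src tgt l) (p : V → Bool) :
    (l.map tgt).countP p = (l.map src).countP p :=
  (map_tgt_perm_map_src h).countP_eq p

omit [DecidableEq E] in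
lemma open_countP {l : List E} (hc : l.Chain' fun a b => tgt a = src b) (hne : l ≠ [])
    {u w : V} (hu : src (l.head hne) = u) (hw : tgt (l.getLast hne) = w) (huw : u ≠ w) :
    (l.map tgt).countP (fun v => decide (v = w))
      = (l.map src).countP (fun v => decide (v = w)) + 1 := by
  have h1 := map_tgt_open hc hne
  have h2 : l.map src = u :: (l.map src).tail := by
    cases l with
    | nil => simp at hne
    | cons e t => simp only [List.map_cons, List.tail_cons]
                  simp only [List.head_cons] at hu
                  rw [hu]
  rw [h1, hw]
  conv_rhs => rw [h2]
  rw [List.countP_append, List.countP_cons]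
  simp [huw, Ne.symm huw]

lemma card_filter_toFinset {l : List E} (hl : l.Nodup) (q : E → Prop) [DecidablePred q] :
    (l.toFinset.filter q).card = l.countP (fun e => decide (q e)) := by
  have h1 : l.toFinset.filter q = (l.filter (fun e => decide (q e))).toFinset := by
    rw [List.toFinset_filter]
    apply Finset.filter_congr
    intro x _
    simp
  rw [h1, List.toFinset_card_of_nodup (hl.filter _), List.countP_eq_length_filter]

variable [Fintype E]

lemma exists_closed_from (R : Finset E)
    (hbal : ∀ v, (R.filter fun e => tgt e = v).card = (R.filter fun e => src e = v).card)
    (u : V) (hu : (R.filter fun e => src e = u).Nonempty) :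
    ∃ l, ∃ hne : l ≠ [], GTrail src tgt l ∧ (∀ e ∈ l, e ∈ R) ∧
      src (l.head hne) = u ∧ tgt (l.getLast hne) = u := by
  classical
  set Q : ℕ → Prop := fun m => ∃ l, GTrail src tgt l ∧ (∀ e ∈ l, e ∈ R) ∧ l.length = m ∧
    ∃ hne : l ≠ [], src (l.head hne) = u with hQ
  obtain ⟨e0, he0⟩ := hu
  rw [Finset.mem_filter] at he0
  have hQ1 : Q 1 := ⟨[e0], ⟨by simp, List.isChain_singleton _⟩, by simpa using he0.1, by simp, by simp, he0.2⟩
  have hcard : ∀ {m}, Q m → m ≤ Fintype.card E := by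
    rintro m ⟨l, ⟨hnd, _⟩, _, hlen, _⟩
    exact hlen ▸ hnd.length_le_card
  set L := Nat.findGreatest Q (Fintype.card E) with hL
  have hQL : Q L := Nat.findGreatest_spec (hcard hQ1) hQ1
  obtain ⟨l, htrail, hsub, hlen, hne, hhead⟩ := hQL
  refine ⟨l, hne, htrail, hsub, hhead, ?_⟩
  by_contra hw0
  set w := tgt (l.getLast hne) with hwdef
  have huw : u ≠ w := fun h => hw0 h.symm
  have hcnt := open_countP (src := src) (tgt := tgt) htrail.2 hne hhead hwdef.symm huw
  have hex : ∃ e, e ∈ R ∧ src e = w ∧ e ∉ l := by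
    by_contra hno
    push_neg at hno
    have hsub1 : R.filter (fun e => src e = w) ⊆ l.toFinset.filter (fun e => src e = w) := by
      intro e he
      rw [Finset.mem_filter] at he ⊢
      exact ⟨List.mem_toFinset.mpr (hno e he.1 he.2), he.2⟩
    have hsub2 : l.toFinset.filter (fun e => tgt e = w) ⊆ R.filter (fun e => tgt e = w) := by
      intro e he
      rw [Finset.mem_filter] at he ⊢
      exact ⟨hsub e (List.mem_toFinset.mp he.1), he.2⟩
    have c1 : (l.toFinset.filter (fun e => src e = w)).card
        = (l.map src).countP (fun v => decide (v = w)) := by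
      rw [card_filter_toFinset htrail.1, List.countP_map]
      rfl
    have c2 : (l.toFinset.filter (fun e => tgt e = w)).card
        = (l.map tgt).countP (fun v => decide (v = w)) := by
      rw [card_filter_toFinset htrail.1, List.countP_map]
      rfl
    have k1 := Finset.card_le_card hsub1
    have k2 := Finset.card_le_card hsub2
    have k3 := hbal w
    omega
  obtain ⟨e, heR, hesrc, henl⟩ := hex
  have htrail' : GTrail src tgt (l ++ [e]) := by
    constructor
    · rw [List.nodup_append]
      exact ⟨htrail.1, by simp, by intro a ha b hb; simp at hb; subst hb; exact fun h => henl (h ▸ ha)⟩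
    · rw [List.Chain', List.isChain_append]
      refine ⟨htrail.2, by simp, ?_⟩
      intro x hx y hy
      rw [List.getLast?_eq_getLast hne] at hx
      simp only [Option.mem_def, Option.some.injEq] at hx
      simp only [List.head?_cons, Option.mem_def, Option.some.injEq] at hy
      subst hx; subst hy
      rw [hesrc, ← hwdef]
  have hQL1 : Q (L + 1) := by
    refine ⟨l ++ [e], htrail', ?_, by simpa using hlen, by simp, ?_⟩
    · intro f hf
      rcases List.mem_append.mp hf with h | h
      · exact hsub f h
      · simpa using (by simpa using h : f = e) ▸ heR
    · rw [List.head_append_of_ne_nil hne]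
      exact hhead
  have := Nat.le_findGreatest (hcard hQL1) hQL1
  omega

lemma exists_eulerian_list [Nonempty E]
    (hbal : ∀ v, (Finset.univ.filter fun e : E => tgt e = v).card
      = (Finset.univ.filter fun e : E => src e = v).card)
    (hconn : ∀ e e' : E,
      Relation.ReflTransGen (fun a b => ∃ f : E, src f = a ∧ tgt f = b) (tgt e) (src e')) :
    ∃ l : List E, GTrail src tgt l ∧ GClosed src tgt l ∧ l.length = Fintype.card E := by
  classical
  set Q : ℕ → Prop := fun m => ∃ l, GTrail src tgt l ∧ GClosed src tgt l ∧ l.length = m with hQdef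
  have hQ0 : Q 0 := ⟨[], ⟨by simp, List.isChain_nil⟩, fun h => absurd rfl h, rfl⟩
  have hcard : ∀ {m}, Q m → m ≤ Fintype.card E := by
    rintro m ⟨l, ⟨hnd, _⟩, _, hlen⟩
    exact hlen ▸ hnd.length_le_card
  set L := Nat.findGreatest Q (Fintype.card E) with hLdef
  have hQL : Q L := Nat.findGreatest_spec (Nat.zero_le _) hQ0
  obtain ⟨l, htr, hcl, hlen⟩ := hQL
  rcases Nat.lt_or_ge L (Fintype.card E) with hlt | hge
  · exfalso
    rcases eq_or_ne l [] with hnil | hne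
    · obtain ⟨e⟩ := ‹Nonempty E›
      obtain ⟨t, htne, httr, _, hth, htl⟩ := exists_closed_from (src := src) (tgt := tgt)
        (R := Finset.univ) (by simpa using hbal) (src e) ⟨e, by simp⟩
      have hQt : Q t.length := ⟨t, httr, fun h => by rw [htl, hth], rfl⟩
      have h1 := Nat.le_findGreatest (hcard hQt) hQt
      have h2 : 0 < t.length := List.length_pos_iff.mpr htne
      have hL0 : L = 0 := by rw [← hlen, hnil]; rfl
      omega
    · set R : Finset E := Finset.univ.filter (fun e => e ∉ l) with hRdef
      have hcyc : GCyc src tgt l := gcyc_iff.mp ⟨htr.2, hcl⟩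
      have hsplit : ∀ (P : E → Prop) (_ : DecidablePred P),
          (Finset.univ.filter P).card = (l.toFinset.filter P).card + (R.filter P).card := by
        intro P _
        rw [← Finset.card_union_of_disjoint ?disj]
        case disj =>
          rw [Finset.disjoint_left]
          intro e he1 he2
          rw [Finset.mem_filter] at he1 he2
          rw [List.mem_toFinset] at he1
          rw [hRdef, Finset.mem_filter] at he2
          exact he2.1.2 he1.1
        congr 1
        ext e
        simp only [Finset.mem_filter, Finset.mem_union, Finset.mem_univ, true_and,
          List.mem_toFinset, hRdef]
        tauto
      have hcount : ∀ v, (l.toFinset.filter fun e => tgt e = v).card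
          = (l.toFinset.filter fun e => src e = v).card := by
        intro v
        rw [card_filter_toFinset htr.1, card_filter_toFinset htr.1]
        have h1 := cyc_countP hcyc (fun x => decide (x = v))
        rw [List.countP_map, List.countP_map] at h1
        exact h1
      have hRbal : ∀ v, (R.filter fun e => tgt e = v).card
          = (R.filter fun e => src e = v).card := by
        intro v
        have h1 := hsplit (fun e => tgt e = v) (by infer_instance)
        have h2 := hsplit (fun e => src e = v) (by infer_instance)
        have h3 := hbal v
        have h4 := hcount v
        omega
      -- on-l membership transfer
      have onl_tgt_src : ∀ a, (∃ g ∈ l, tgt g = a) → ∃ g ∈ l, src g = a := by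
        intro a ⟨g, hgl, hgt⟩
        have h1 : a ∈ l.map tgt := hgt ▸ List.mem_map_of_mem (f := tgt) hgl
        have h2 : a ∈ l.map src := (map_tgt_perm_map_src hcyc).mem_iff.mp h1
        obtain ⟨g', hg', hg'e⟩ := List.mem_map.mp h2
        exact ⟨g', hg', hg'e⟩
      have key : ∃ g ∈ l, (R.filter fun e => src e = src g).Nonempty := by
        by_contra hno
        push_neg at hno
        have hnoR : ∀ g ∈ l, ∀ f ∈ R, src f ≠ src g := by
          intro g hg f hf hsf
          exact absurd (hno g hg) (Finset.nonempty_iff_ne_empty.mp ⟨f, Finset.mem_filter.mpr ⟨hf, hsf⟩⟩)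
        have hstep : ∀ a b, Relation.ReflTransGen
            (fun a b => ∃ f : E, src f = a ∧ tgt f = b) a b →
            (∃ g ∈ l, tgt g = a) → ∃ g ∈ l, tgt g = b := by
          intro a b hreach
          induction hreach with
          | refl => exact id
          | tail h1 h2 ih =>
            intro ha
            obtain ⟨f, hf1, hf2⟩ := h2
            obtain ⟨g', hg'l, hg's⟩ := onl_tgt_src _ (ih ha)
            have hf_in_l : f ∈ l := by
              by_contra hfnl
              exact hnoR g' hg'l f (by simp [hRdef, hfnl]) (hf1.trans hg's.symm)
            exact ⟨f, hf_in_l, hf2⟩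
        have hRne : R.Nonempty := by
          rw [← Finset.card_pos]
          have h1 := hsplit (fun _ => True) (by infer_instance)
          simp only [Finset.filter_true] at h1
          have h2 : l.toFinset.card = l.length := List.toFinset_card_of_nodup htr.1
          have h3 : (Finset.univ : Finset E).card = Fintype.card E := rfl
          omega
        obtain ⟨e', he'⟩ := hRne
        have he'nl : e' ∉ l := by
          rw [hRdef, Finset.mem_filter] at he'
          exact he'.2
        have hreach := hconn (l.head hne) e'
        have hon := hstep _ _ hreach ⟨l.head hne, List.head_mem hne, rfl⟩
        obtain ⟨g', hg'l, hg's⟩ := onl_tgt_src _ hon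
        exact hnoR g' hg'l e' he' hg's.symm
      obtain ⟨g, hgl, hgR⟩ := key
      obtain ⟨t, htne, httr, htsub, hth, htl⟩ := exists_closed_from (src := src) (tgt := tgt)
        R hRbal (src g) hgR
      have hlpos : 0 < l.length := List.length_pos_iff.mpr hne
      obtain ⟨i, hi⟩ := List.mem_iff_get.mp hgl
      set l' := l.rotate i.val with hl'def
      have hl'cyc : GCyc src tgt l' := gcyc_rotate hcyc i.val
      have hl'nd : l'.Nodup := List.nodup_rotate.mpr htr.1
      have hl'len : l'.length = l.length := List.length_rotate l i.val
      have hl'ne : l' ≠ [] := by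
        intro h
        rw [h] at hl'len
        exact hne (List.length_eq_zero_iff.mp hl'len.symm)
      have hl'head : l'.head hl'ne = g := by
        rw [← List.get_mk_zero (by rw [hl'len]; exact hlpos : 0 < l'.length)]
        have := List.get_rotate l i.val ⟨0, by simpa using hlpos⟩
        rw [this]
        simp only [← hi]
        congr 1
        exact Fin.ext (by simp [Nat.mod_eq_of_lt i.isLt])
      have hl'cc := gcyc_iff.mpr hl'cyc
      have hdisj : ∀ e ∈ t, e ∉ l' := by
        intro e het hel'
        have := htsub e het
        rw [hRdef, Finset.mem_filter] at this
        exact this.2 (List.mem_rotate.mp hel')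
      have hnew : GTrail src tgt (t ++ l') ∧ GClosed src tgt (t ++ l') := by
        refine ⟨⟨?_, ?_⟩, ?_⟩
        · rw [List.nodup_append]
          exact ⟨httr.1, hl'nd, fun a ha b hb h => hdisj a ha (h ▸ hb)⟩
        · rw [List.Chain', List.isChain_append]
          refine ⟨httr.2, hl'cc.1, ?_⟩
          intro x hx y hy
          rw [List.getLast?_eq_getLast htne] at hx
          rw [List.head?_eq_head hl'ne] at hy
          simp only [Option.mem_def, Option.some.injEq] at hx hy
          subst hx; subst hy
          rw [htl, hl'head]
        · intro hne2
          rw [List.getLast_append_of_ne_nil _ hl'ne, List.head_append_of_ne_nil htne]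
          rw [hl'cc.2 hl'ne, hl'head, hth]
      have hQnew : Q (t ++ l').length := ⟨t ++ l', hnew.1, hnew.2, rfl⟩
      have h1 := Nat.le_findGreatest (hcard hQnew) hQnew
      have h2 : 0 < t.length := List.length_pos_iff.mpr htne
      have h3 : (t ++ l').length = t.length + l.length := by
        rw [List.length_append, hl'len]
      omega
  · have := Nat.findGreatest_le (P := Q) (Fintype.card E)
    exact ⟨l, htr, hcl, by omega⟩

theorem exists_eulerian [Nonempty E]
    (hbal : ∀ v, (Finset.univ.filter fun e : E => tgt e = v).card
      = (Finset.univ.filter fun e : E => src e = v).card)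
    (hconn : ∀ e e' : E,
      Relation.ReflTransGen (fun a b => ∃ f : E, src f = a ∧ tgt f = b) (tgt e) (src e'))
    (m : ℕ) (hm : m = Fintype.card E) :
    ∃ f : ZMod m → E, Function.Bijective f ∧ ∀ i, tgt (f i) = src (f (i + 1)) := by
  obtain ⟨l, htr, hcl, hlen⟩ := exists_eulerian_list (src := src) (tgt := tgt) hbal hconn
  have hmpos : 0 < m := hm ▸ Fintype.card_pos
  haveI : NeZero m := ⟨by omega⟩
  have hcyc : GCyc src tgt l := gcyc_iff.mp ⟨htr.2, hcl⟩
  have hlm : l.length = m := by rw [hlen, hm]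
  refine ⟨fun i => l[i.val]'(by rw [hlm]; exact ZMod.val_lt i), ?_, ?_⟩
  · rw [Fintype.bijective_iff_injective_and_card]
    constructor
    · intro a b hab
      have h1 : l.get ⟨a.val, by rw [hlm]; exact ZMod.val_lt a⟩
          = l.get ⟨b.val, by rw [hlm]; exact ZMod.val_lt b⟩ := hab
      have h2 := (htr.1.get_inj_iff).mp h1
      exact ZMod.val_injective m (congrArg Fin.val h2)
    · rw [ZMod.card, hm]
  · intro i
    have h1 := hcyc i.val (by rw [hlm]; exact ZMod.val_lt i)
    have h2 : (i + 1).val = (i.val + 1) % l.length := by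
      rw [hlm, ZMod.val_add, ZMod.val_one_eq_one_mod, Nat.add_mod_mod]
    simp only [getElem_idx_congr l h2]
    exact h1

end Euler

section App
variable (n c : ℕ) [NeZero n] (k' : ℕ)

/-- The Lipschitz predicate on words of length `k'+1`. -/
def LipP : (Fin (k'+1) → ZMod n) → Prop := fun w =>
  ∀ i : ℕ, ∀ h : i + 1 < k'+1,
    min ((w ⟨i + 1, h⟩ - w ⟨i, by omega⟩).val)
        (n - (w ⟨i + 1, h⟩ - w ⟨i, by omega⟩).val) ≤ c

lemma dok_zero : min ((0 : ZMod n)).val (n - ((0 : ZMod n)).val) ≤ c := by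
  rw [ZMod.val_zero]
  simp

lemma dok_one (hc : 1 ≤ c) : min ((1 : ZMod n)).val (n - ((1 : ZMod n)).val) ≤ c := by
  rw [ZMod.val_one_eq_one_mod]
  have : 0 < n := Nat.pos_of_ne_zero (NeZero.ne n)
  rcases Nat.lt_or_ge 1 n with h | h
  · rw [Nat.mod_eq_of_lt h]; omega
  · have : n = 1 := by omega
    subst this; simp

lemma mem_wordsOf_lip (w : Fin (k'+1) → ZMod n) :
    w ∈ wordsOf (LipP n c k') ↔ LipP n c k' w := by
  classical
  rw [wordsOf]
  simp

lemma lip_const_zero : LipP n c k' (fun _ => 0) := by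
  intro i h
  simpa using dok_zero n c

instance : Nonempty ↥(wordsOf (LipP n c k')) :=
  ⟨⟨fun _ => 0, (mem_wordsOf_lip n c k' _).mpr (lip_const_zero n c k')⟩⟩

/-- Source vertex (first `k'` letters) of an edge. -/
def esrc : ↥(wordsOf (LipP n c k')) → (Fin k' → ZMod n) := fun e t => e.val t.castSucc

/-- Target vertex (last `k'` letters) of an edge. -/
def etgt : ↥(wordsOf (LipP n c k')) → (Fin k' → ZMod n) := fun e t => e.val t.succ

/-- Lipschitz predicate on vertices. -/
def VLip (v : Fin k' → ZMod n) : Prop :=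
  ∀ i : ℕ, ∀ h : i + 1 < k',
    min ((v ⟨i + 1, h⟩ - v ⟨i, by omega⟩).val)
        (n - (v ⟨i + 1, h⟩ - v ⟨i, by omega⟩).val) ≤ c

lemma esrc_lip (e : ↥(wordsOf (LipP n c k'))) : VLip n c k' (esrc n c k' e) := by
  intro i h
  have hp := (mem_wordsOf_lip n c k' e.val).mp e.2
  have := hp i (by omega)
  simpa [esrc, Fin.castSucc_mk] using this

lemma etgt_lip (e : ↥(wordsOf (LipP n c k'))) : VLip n c k' (etgt n c k' e) := by
  intro i h
  have hp := (mem_wordsOf_lip n c k' e.val).mp e.2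
  have := hp (i+1) (by omega)
  simpa [etgt, Fin.succ_mk] using this

/-- Word obtained by prepending a letter at distance `d` before vertex `v`. -/
def inWord (hk : 0 < k') (v : Fin k' → ZMod n) (d : ZMod n) : Fin (k'+1) → ZMod n :=
  fun t => if h : t.val = 0 then v ⟨0, hk⟩ - d else v ⟨t.val - 1, by omega⟩

/-- Word obtained by appending a letter at distance `d` after vertex `v`. -/
def outWord (hk : 0 < k') (v : Fin k' → ZMod n) (d : ZMod n) : Fin (k'+1) → ZMod n :=
  fun t => if h : t.val < k' then v ⟨t.val, h⟩ else v ⟨k'-1, by omega⟩ + d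

lemma inWord_eval_zero (hk : 0 < k') (v : Fin k' → ZMod n) (d : ZMod n)
    (hh : (0:ℕ) < k'+1) : inWord n k' hk v d ⟨0, hh⟩ = v ⟨0, hk⟩ - d :=
  dif_pos rfl

lemma inWord_eval_pos (hk : 0 < k') (v : Fin k' → ZMod n) (d : ZMod n)
    {i : ℕ} (hi : 0 < i) (hh : i < k'+1) :
    inWord n k' hk v d ⟨i, hh⟩ = v ⟨i - 1, by omega⟩ :=
  dif_neg (Nat.pos_iff_ne_zero.mp hi)

lemma outWord_eval_lt (hk : 0 < k') (v : Fin k' → ZMod n) (d : ZMod n)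
    {i : ℕ} (hi : i < k') (hh : i < k'+1) :
    outWord n k' hk v d ⟨i, hh⟩ = v ⟨i, hi⟩ :=
  dif_pos hi

lemma outWord_eval_last (hk : 0 < k') (v : Fin k' → ZMod n) (d : ZMod n)
    {i : ℕ} (hi : ¬ i < k') (hh : i < k'+1) :
    outWord n k' hk v d ⟨i, hh⟩ = v ⟨k'-1, by omega⟩ + d :=
  dif_neg hi

lemma vidx_eq (v : Fin k' → ZMod n) {i j : ℕ} (h : i = j) (hi : i < k') (hj : j < k') :
    v ⟨i, hi⟩ = v ⟨j, hj⟩ := by subst h; rfl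

lemma widx_eq (w : Fin (k'+1) → ZMod n) {i j : ℕ} (h : i = j)
    (hi : i < k'+1) (hj : j < k'+1) : w ⟨i, hi⟩ = w ⟨j, hj⟩ := by subst h; rfl

lemma lipP_idx {w : Fin (k'+1) → ZMod n} (hp : LipP n c k' w) (a b : ℕ)
    (ha : a < k'+1) (hb : b < k'+1) (hab : b = a + 1) :
    min ((w ⟨b, hb⟩ - w ⟨a, ha⟩).val) (n - (w ⟨b, hb⟩ - w ⟨a, ha⟩).val) ≤ c := by
  subst hab
  exact hp a hb

lemma vlip_idx {v : Fin k' → ZMod n} (hv : VLip n c k' v) (a b : ℕ)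
    (ha : a < k') (hb : b < k') (hab : b = a + 1) :
    min ((v ⟨b, hb⟩ - v ⟨a, ha⟩).val) (n - (v ⟨b, hb⟩ - v ⟨a, ha⟩).val) ≤ c := by
  subst hab
  exact hv a hb

lemma inWord_lip (hk : 0 < k') {v : Fin k' → ZMod n} (hv : VLip n c k' v)
    {d : ZMod n} (hd : min d.val (n - d.val) ≤ c) :
    LipP n c k' (inWord n k' hk v d) := by
  intro i h
  rcases Nat.eq_zero_or_pos i with rfl | hi
  · have e1 : inWord n k' hk v d ⟨0+1, h⟩ = v ⟨0, hk⟩ :=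
      inWord_eval_pos n k' hk v d (by omega) h
    have e0 : inWord n k' hk v d ⟨0, by omega⟩ = v ⟨0, hk⟩ - d :=
      inWord_eval_zero n k' hk v d (by omega)
    rw [e1, e0, sub_sub_cancel]
    exact hd
  · obtain ⟨j, rfl⟩ : ∃ j, i = j + 1 := ⟨i - 1, by omega⟩
    have e1 : inWord n k' hk v d ⟨j+1+1, h⟩ = v ⟨j+1, by omega⟩ :=
      inWord_eval_pos n k' hk v d (by omega) h
    have e0 : inWord n k' hk v d ⟨j+1, by omega⟩ = v ⟨j, by omega⟩ :=
      inWord_eval_pos n k' hk v d (by omega) (by omega)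
    rw [e1, e0]
    exact vlip_idx n c k' hv j (j+1) (by omega) (by omega) rfl

lemma outWord_lip (hk : 0 < k') {v : Fin k' → ZMod n} (hv : VLip n c k' v)
    {d : ZMod n} (hd : min d.val (n - d.val) ≤ c) :
    LipP n c k' (outWord n k' hk v d) := by
  intro i h
  rcases Nat.lt_or_ge (i+1) k' with hi | hi
  · have e1 : outWord n k' hk v d ⟨i+1, h⟩ = v ⟨i+1, hi⟩ :=
      outWord_eval_lt n k' hk v d hi h
    have e0 : outWord n k' hk v d ⟨i, by omega⟩ = v ⟨i, by omega⟩ :=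
      outWord_eval_lt n k' hk v d (by omega) (by omega)
    rw [e1, e0]
    exact vlip_idx n c k' hv i (i+1) (by omega) (by omega) rfl
  · have e1 : outWord n k' hk v d ⟨i+1, h⟩ = v ⟨k'-1, by omega⟩ + d :=
      outWord_eval_last n k' hk v d (by omega) h
    have e0 : outWord n k' hk v d ⟨i, by omega⟩ = v ⟨i, by omega⟩ :=
      outWord_eval_lt n k' hk v d (by omega) (by omega)
    have e2 : (⟨i, by omega⟩ : Fin k') = ⟨k'-1, by omega⟩ := Fin.ext (show i = k'-1 by omega)
    rw [e1, e0, e2, add_sub_cancel_left]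
    exact hd

lemma lip_balance (hk : 0 < k') (v : Fin k' → ZMod n) :
    (Finset.univ.filter fun e : ↥(wordsOf (LipP n c k')) => etgt n c k' e = v).card
      = (Finset.univ.filter fun e : ↥(wordsOf (LipP n c k')) => esrc n c k' e = v).card := by
  classical
  by_cases hv : VLip n c k' v
  · set D : Finset (ZMod n) := Finset.univ.filter (fun d => min d.val (n - d.val) ≤ c) with hD
    have hmemD : ∀ d : ZMod n, d ∈ D ↔ min d.val (n - d.val) ≤ c := by
      intro d; rw [hD, Finset.mem_filter]; simp
    have htgt : (Finset.univ.filter fun e : ↥(wordsOf (LipP n c k')) =>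
        etgt n c k' e = v).card = D.card := by
      refine Finset.card_bij'
        (fun e _ => v ⟨0, hk⟩ - e.val ⟨0, by omega⟩)
        (fun d hd => ⟨inWord n k' hk v d, (mem_wordsOf_lip n c k' _).mpr
          (inWord_lip n c k' hk hv ((hmemD d).mp hd))⟩) ?_ ?_ ?_ ?_
      · intro e he
        rw [Finset.mem_filter] at he
        show v ⟨0, hk⟩ - e.val ⟨0, by omega⟩ ∈ D
        rw [hmemD]
        have hp := (mem_wordsOf_lip n c k' e.val).mp e.2
        have hv0 : (v ⟨0, hk⟩ : ZMod n) = e.val ⟨1, by omega⟩ := (congrFun he.2 ⟨0, hk⟩).symm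
        rw [hv0]
        exact lipP_idx n c k' hp 0 1 (by omega) (by omega) rfl
      · intro d hd
        rw [Finset.mem_filter]
        refine ⟨Finset.mem_univ _, ?_⟩
        funext t
        obtain ⟨tv, htv⟩ := t
        show inWord n k' hk v d ⟨tv+1, by omega⟩ = v ⟨tv, htv⟩
        exact inWord_eval_pos n k' hk v d (by omega) (by omega)
      · intro e he
        rw [Finset.mem_filter] at he
        apply Subtype.ext
        show inWord n k' hk v (v ⟨0, hk⟩ - e.val ⟨0, by omega⟩) = e.val
        funext t
        obtain ⟨tv, htv⟩ := t
        rcases Nat.eq_zero_or_pos tv with rfl | ht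
        · rw [inWord_eval_zero n k' hk v _ (by omega), sub_sub_cancel]
        · obtain ⟨tu, rfl⟩ : ∃ tu, tv = tu + 1 := ⟨tv - 1, by omega⟩
          have e1 : inWord n k' hk v (v ⟨0, hk⟩ - e.val ⟨0, by omega⟩) ⟨tu+1, htv⟩
              = v ⟨tu, by omega⟩ := inWord_eval_pos n k' hk v _ (by omega) htv
          rw [e1]
          exact (congrFun he.2 ⟨tu, by omega⟩).symm
      · intro d hd
        show v ⟨0, hk⟩ - inWord n k' hk v d ⟨0, by omega⟩ = d
        rw [inWord_eval_zero n k' hk v d (by omega), sub_sub_cancel]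
    have hsrc : (Finset.univ.filter fun e : ↥(wordsOf (LipP n c k')) =>
        esrc n c k' e = v).card = D.card := by
      refine Finset.card_bij'
        (fun e _ => e.val ⟨k', by omega⟩ - v ⟨k'-1, by omega⟩)
        (fun d hd => ⟨outWord n k' hk v d, (mem_wordsOf_lip n c k' _).mpr
          (outWord_lip n c k' hk hv ((hmemD d).mp hd))⟩) ?_ ?_ ?_ ?_
      · intro e he
        rw [Finset.mem_filter] at he
        show e.val ⟨k', by omega⟩ - v ⟨k'-1, by omega⟩ ∈ D
        rw [hmemD]
        have hp := (mem_wordsOf_lip n c k' e.val).mp e.2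
        have hlast : (v ⟨k'-1, by omega⟩ : ZMod n) = e.val ⟨k'-1, by omega⟩ :=
          (congrFun he.2 ⟨k'-1, by omega⟩).symm
        rw [hlast]
        exact lipP_idx n c k' hp (k'-1) k' (by omega) (by omega) (by omega)
      · intro d hd
        rw [Finset.mem_filter]
        refine ⟨Finset.mem_univ _, ?_⟩
        funext t
        obtain ⟨tv, htv⟩ := t
        show outWord n k' hk v d ⟨tv, by omega⟩ = v ⟨tv, htv⟩
        exact outWord_eval_lt n k' hk v d htv (by omega)
      · intro e he
        rw [Finset.mem_filter] at he
        apply Subtype.ext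
        show outWord n k' hk v (e.val ⟨k', by omega⟩ - v ⟨k'-1, by omega⟩) = e.val
        funext t
        obtain ⟨tv, htv⟩ := t
        rcases Nat.lt_or_ge tv k' with ht | ht
        · have e1 : outWord n k' hk v (e.val ⟨k', by omega⟩ - v ⟨k'-1, by omega⟩) ⟨tv, htv⟩
              = v ⟨tv, ht⟩ := outWord_eval_lt n k' hk v _ ht htv
          rw [e1]
          exact (congrFun he.2 ⟨tv, ht⟩).symm
        · have e1 : outWord n k' hk v (e.val ⟨k', by omega⟩ - v ⟨k'-1, by omega⟩) ⟨tv, htv⟩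
              = v ⟨k'-1, by omega⟩ + (e.val ⟨k', by omega⟩ - v ⟨k'-1, by omega⟩) :=
            outWord_eval_last n k' hk v _ (by omega) htv
          rw [e1, add_sub_cancel]
          exact congrArg e.val (Fin.ext (show k' = tv by omega))
      · intro d hd
        show outWord n k' hk v d ⟨k', by omega⟩ - v ⟨k'-1, by omega⟩ = d
        have e1 : outWord n k' hk v d ⟨k', by omega⟩ = v ⟨k'-1, by omega⟩ + d :=
          outWord_eval_last n k' hk v d (by omega) (by omega)
        rw [e1, add_sub_cancel_left]
    rw [htgt, hsrc]
  · have h1 : (Finset.univ.filter fun e : ↥(wordsOf (LipP n c k')) => etgt n c k' e = v) = ∅ := by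
      rw [Finset.filter_eq_empty_iff]
      intro e _ he
      exact hv (he ▸ etgt_lip n c k' e)
    have h2 : (Finset.univ.filter fun e : ↥(wordsOf (LipP n c k')) => esrc n c k' e = v) = ∅ := by
      rw [Finset.filter_eq_empty_iff]
      intro e _ he
      exact hv (he ▸ esrc_lip n c k' e)
    rw [h1, h2]

lemma natCast_val_self (x : ZMod n) : ((x.val : ℕ) : ZMod n) = x := by
  simp [ZMod.natCast_val, ZMod.cast_id]

/-- One reachability step in the de Bruijn-type graph. -/
def StepRel : (Fin k' → ZMod n) → (Fin k' → ZMod n) → Prop :=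
  fun a b => ∃ f : ↥(wordsOf (LipP n c k')), esrc n c k' f = a ∧ etgt n c k' f = b

lemma reach_window (g : ℕ → ZMod n)
    (hg : ∀ i, min ((g (i+1) - g i).val) (n - (g (i+1) - g i).val) ≤ c) (T : ℕ) :
    Relation.ReflTransGen (StepRel n c k')
      (fun s : Fin k' => g s.val) (fun s : Fin k' => g (T + s.val)) := by
  induction T with
  | zero =>
    have e : (fun s : Fin k' => g (0 + s.val)) = (fun s : Fin k' => g s.val) := by
      funext s; rw [Nat.zero_add]
    rw [e]
  | succ T ih =>
    refine ih.tail ?_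
    refine ⟨⟨fun t : Fin (k'+1) => g (T + t.val), ?_⟩, ?_, ?_⟩
    · rw [mem_wordsOf_lip]
      intro i h
      exact hg (T + i)
    · rfl
    · funext t
      exact congrArg g (show T + (t.val + 1) = (T + 1) + t.val by omega)

lemma reach_vertices (hk : 0 < k') (hc : 1 ≤ c) (a b : Fin k' → ZMod n)
    (ha : VLip n c k' a) (hb : VLip n c k' b) :
    Relation.ReflTransGen (StepRel n c k') a b := by
  classical
  set K := k' - 1 with hK
  set aK := a ⟨K, by omega⟩ with haK
  set b0 := b ⟨0, hk⟩ with hb0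
  set r := (b0 - aK).val with hr
  set g : ℕ → ZMod n := fun i =>
    if h : i < k' then a ⟨i, h⟩
    else if i ≤ K + r then aK + ((i - K : ℕ) : ZMod n)
    else b ⟨min (i - K - r) K, by omega⟩ with hg
  have hcast : ((r : ℕ) : ZMod n) = b0 - aK := natCast_val_self n _
  have hA : ∀ i (h : i < k'), g i = a ⟨i, h⟩ := fun i h => dif_pos h
  have hB : ∀ i, K ≤ i → i ≤ K + r → g i = aK + ((i - K : ℕ) : ZMod n) := by
    intro i h1 h2
    by_cases h : i < k'
    · rw [hA i h]
      have : i = K := by omega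
      subst this
      simp [haK]
    · show dite _ _ _ = _
      rw [dif_neg h, if_pos h2]
  have hC : ∀ i, K + r ≤ i → g i = b ⟨min (i - K - r) K, by omega⟩ := by
    intro i h1
    by_cases h : i < k'
    · rw [hA i h]
      have hr0 : r = 0 := by omega
      have hbeq : b0 = aK := by
        have h5 := (ZMod.val_eq_zero (b0 - aK)).mp (by rw [← hr, hr0])
        exact sub_eq_zero.mp h5
      have e3 : (⟨min (i - K - r) K, by omega⟩ : Fin k') = ⟨0, hk⟩ :=
        Fin.ext (show min (i - K - r) K = 0 by omega)
      rw [e3, ← hb0, hbeq, haK]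
      exact congrArg a (Fin.ext (show i = K by omega))
    · by_cases h2 : i ≤ K + r
      · have hiKr : i = K + r := by omega
        rw [hB i (by omega) h2]
        have e4 : ((i - K : ℕ) : ZMod n) = b0 - aK := by
          rw [show (i - K : ℕ) = r by omega, hcast]
        have e3 : (⟨min (i - K - r) K, by omega⟩ : Fin k') = ⟨0, hk⟩ :=
          Fin.ext (show min (i - K - r) K = 0 by omega)
        rw [e4, e3, ← hb0]
        exact add_sub_cancel aK b0
      · show dite _ _ _ = _
        rw [dif_neg h, if_neg h2]
  have hgstep : ∀ i, min ((g (i+1) - g i).val) (n - (g (i+1) - g i).val) ≤ c := by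
    intro i
    rcases Nat.lt_or_ge (i+1) k' with h1 | h1
    · rw [hA (i+1) h1, hA i (by omega)]
      exact vlip_idx n c k' ha i (i+1) (by omega) (by omega) rfl
    · rcases Nat.lt_or_ge i (K + r) with h2 | h2
      · rw [hB (i+1) (by omega) (by omega), hB i (by omega) (by omega)]
        rw [show ((i+1) - K : ℕ) = (i - K) + 1 by omega]
        have e5 : aK + (((i - K) + 1 : ℕ) : ZMod n) - (aK + ((i - K : ℕ) : ZMod n)) = 1 := by
          push_cast
          ring
        rw [e5]
        exact dok_one n c hc
      · rw [hC (i+1) (by omega), hC i (by omega)]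
        rcases Nat.lt_or_ge (i - K - r) K with h3 | h3
        · rw [congrArg b (Fin.ext (show min ((i+1) - K - r) K = (i - K - r) + 1 by omega) :
            (⟨min ((i+1) - K - r) K, by omega⟩ : Fin k') = ⟨(i - K - r) + 1, by omega⟩)]
          rw [congrArg b (Fin.ext (show min (i - K - r) K = i - K - r by omega) :
            (⟨min (i - K - r) K, by omega⟩ : Fin k') = ⟨i - K - r, by omega⟩)]
          exact vlip_idx n c k' hb (i - K - r) ((i - K - r) + 1) (by omega) (by omega) rfl
        · rw [congrArg b (Fin.ext (show min ((i+1) - K - r) K = min (i - K - r) K by omega) :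
            (⟨min ((i+1) - K - r) K, by omega⟩ : Fin k') = ⟨min (i - K - r) K, by omega⟩)]
          rw [sub_self]
          exact dok_zero n c
  have hwin := reach_window n c k' g hgstep (K + r)
  have e1 : (fun s : Fin k' => g s.val) = a := by
    funext s
    rw [hA s.val s.isLt]
  have e2 : (fun s : Fin k' => g ((K + r) + s.val)) = b := by
    funext s
    rw [hC ((K + r) + s.val) (by omega)]
    refine congrArg b (Fin.ext ?_)
    show min ((K + r) + s.val - K - r) K = s.val
    have := s.isLt
    omega
  rw [e1, e2] at hwin
  exact hwin

end App

/-- U-cycles of `k`-letter Lipschitz words with constant `c` over the cyclic alphabet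
`ZMod n` exist for all `k, n, c ≥ 1`.  A word is Lipschitz with constant `c` if each
successive letter is within cyclic distance `c` of the previous one, where the cyclic
distance between `a` and `b` in `ZMod n` is `min v (n - v)` with `v = (a - b).val`. -/
theorem ucycle_lipschitz_words (k n c : ℕ) [NeZero n] (hk : 1 ≤ k) (hn : 1 ≤ n)
    (hc : 1 ≤ c) :
    HasUCycle (wordsOf (fun w : Fin k → ZMod n =>
      ∀ i : ℕ, ∀ h : i + 1 < k,
        min ((w ⟨i + 1, h⟩ - w ⟨i, by omega⟩).val)
            (n - (w ⟨i + 1, h⟩ - w ⟨i, by omega⟩).val) ≤ c)) := by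
  classical
  obtain ⟨k', rfl⟩ : ∃ k', k = k' + 1 := ⟨k - 1, by omega⟩
  show HasUCycle (wordsOf (LipP n c k'))
  have hconn : ∀ e e' : ↥(wordsOf (LipP n c k')), Relation.ReflTransGen
      (fun a b => ∃ f : ↥(wordsOf (LipP n c k')), esrc n c k' f = a ∧ etgt n c k' f = b)
      (etgt n c k' e) (esrc n c k' e') := by
    intro e e'
    rcases Nat.eq_zero_or_pos k' with hk0 | hk0
    · subst hk0
      have h0 : etgt n c 0 e = esrc n c 0 e' := funext fun t => t.elim0
      rw [h0]
    · exact reach_vertices n c k' hk0 hc _ _ (etgt_lip n c k' e) (esrc_lip n c k' e')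
  have hbal : ∀ v, (Finset.univ.filter fun e : ↥(wordsOf (LipP n c k')) =>
        etgt n c k' e = v).card
      = (Finset.univ.filter fun e : ↥(wordsOf (LipP n c k')) => esrc n c k' e = v).card := by
    intro v
    rcases Nat.eq_zero_or_pos k' with hk0 | hk0
    · subst hk0
      have h1 : ∀ e : ↥(wordsOf (LipP n c 0)), etgt n c 0 e = v :=
        fun e => funext fun t => t.elim0
      have h2 : ∀ e : ↥(wordsOf (LipP n c 0)), esrc n c 0 e = v :=
        fun e => funext fun t => t.elim0
      simp [h1, h2]
    · exact lip_balance n c k' hk0 v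
  have hcards : (wordsOf (LipP n c k')).card = Fintype.card ↥(wordsOf (LipP n c k')) :=
    (Fintype.card_coe _).symm
  obtain ⟨f, hfbij, hfcyc⟩ := exists_eulerian (src := esrc n c k') (tgt := etgt n c k')
    hbal hconn (wordsOf (LipP n c k')).card hcards
  have hwin : ∀ (j : ℕ) (hj : j < k'+1) (i : ZMod (wordsOf (LipP n c k')).card),
      (f (i + (j : ZMod (wordsOf (LipP n c k')).card))).val ⟨0, by omega⟩
        = (f i).val ⟨j, hj⟩ := by
    intro j
    induction j with
    | zero =>
      intro hj i
      rw [Nat.cast_zero, add_zero]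
    | succ j ih =>
      intro hj i
      have h1 : i + ((j+1 : ℕ) : ZMod (wordsOf (LipP n c k')).card)
          = (i + 1) + (j : ZMod (wordsOf (LipP n c k')).card) := by
        push_cast
        ring
      rw [h1, ih (by omega) (i+1)]
      exact (congrFun (hfcyc i) ⟨j, by omega⟩).symm
  have hwm : ∀ i, (fun j : Fin (k'+1) =>
      (f (i + (j.val : ZMod (wordsOf (LipP n c k')).card))).val ⟨0, by omega⟩) = (f i).val := by
    intro i
    funext j
    rw [hwin j.val j.isLt i]
  refine ⟨fun i => (f i).val ⟨0, by omega⟩, ?_, ?_, ?_⟩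
  · intro i _
    show (fun j : Fin (k'+1) =>
      (f (i + (j.val : ZMod (wordsOf (LipP n c k')).card))).val ⟨0, by omega⟩) ∈ ↑(wordsOf (LipP n c k'))
    rw [hwm i]
    exact (f i).2
  · intro x _ y _ hxy
    refine hfbij.1 (Subtype.ext ?_)
    rw [← hwm x, ← hwm y]
    exact hxy
  · intro w hw
    obtain ⟨i, hi⟩ := hfbij.2 ⟨w, hw⟩
    refine ⟨i, Set.mem_univ i, ?_⟩
    show (fun j : Fin (k'+1) =>
      (f (i + (j.val : ZMod (wordsOf (LipP n c k')).card))).val ⟨0, by omega⟩) = w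
    rw [hwm i, hi]
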